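/- (Peano's distance-function theorem) Let F ⊆ ℝⁿ and suppose there exists a continuous function γ : ℝⁿ → F with ‖x - γ(x)‖ = d(x, F) for all x, where d(x,F) = inf_{z∈F}‖x-z‖. Then the function x ↦ d(x,F) is (Fréchet) differentiable at every point x̂ ∉ closure(F), and its gradient at x̂ is (x̂ - γ(x̂))/‖x̂ - γ(x̂)‖. -/

import Mathlib

open Filter Metric Topology RealInnerProductSpace

lemma peano_key_ineq {E : Type*} [NormedAddCommGroup E] [InnerProductSpace ℝ E]
    {a : E} (ha : a ≠ 0) (b : E) :
    ‖a‖ - ‖b‖ ≤ ⟪‖a‖⁻¹ • a, a - b⟫ := by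
  have hna : ‖a‖ ≠ 0 := norm_ne_zero_iff.mpr ha
  have h1 : ⟪‖a‖⁻¹ • a, a⟫ = ‖a‖ := by
    rw [real_inner_smul_left, real_inner_self_eq_norm_mul_norm]
    field_simp
  have h2 : ⟪‖a‖⁻¹ • a, b⟫ ≤ ‖b‖ := by
    calc ⟪‖a‖⁻¹ • a, b⟫ ≤ ‖‖a‖⁻¹ • a‖ * ‖b‖ := real_inner_le_norm _ _
    _ = ‖b‖ := by
      rw [norm_smul, norm_inv, norm_norm, inv_mul_cancel₀ hna, one_mul]
  rw [inner_sub_right, h1]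
  linarith

/-- Peano's theorem on differentiability of the distance function: if `γ` is a continuous
nearest-point selection onto `F`, then `d(·,F)` is differentiable at every point outside
the closure of `F`, with gradient `(x̂ - γ x̂)/‖x̂ - γ x̂‖`. -/
theorem peano_distance_differentiable {n : ℕ}
    (F : Set (EuclideanSpace ℝ (Fin n))) (hF : F.Nonempty)
    (γ : EuclideanSpace ℝ (Fin n) → EuclideanSpace ℝ (Fin n))
    (hγcont : Continuous γ) (hγmem : ∀ x, γ x ∈ F)
    (hγnear : ∀ x, ‖x - γ x‖ = Metric.infDist x F) :
    ∀ x : EuclideanSpace ℝ (Fin n), x ∉ closure F →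
      HasFDerivAt (fun y => Metric.infDist y F)
        (innerSL ℝ (‖x - γ x‖⁻¹ • (x - γ x))) x := by
  intro x hx
  set u : EuclideanSpace ℝ (Fin n) := ‖x - γ x‖⁻¹ • (x - γ x) with hu
  have hd : 0 < Metric.infDist x F := by
    rw [← Metric.infDist_closure]
    exact (isClosed_closure.notMem_iff_infDist_pos hF.closure).mp hx
  have hdx : ‖x - γ x‖ = Metric.infDist x F := hγnear x
  have hxγ : x - γ x ≠ 0 := by
    intro h
    rw [h, norm_zero] at hdx
    linarith
  -- continuity of the two auxiliary unit-vector fields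
  have hV : Tendsto (fun y => ‖y - γ x‖⁻¹ • (y - γ x)) (𝓝 x) (𝓝 u) := by
    have hc : ContinuousAt (fun y : EuclideanSpace ℝ (Fin n) =>
        ‖y - γ x‖⁻¹ • (y - γ x)) x := by
      have hsub : ContinuousAt (fun y : EuclideanSpace ℝ (Fin n) => y - γ x) x :=
        (continuous_id.sub continuous_const).continuousAt
      exact ((hsub.norm.inv₀ (norm_ne_zero_iff.mpr hxγ)).smul hsub)
    exact hc
  have hW : Tendsto (fun y => ‖x - γ y‖⁻¹ • (x - γ y)) (𝓝 x) (𝓝 u) := by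
    have hc : ContinuousAt (fun y : EuclideanSpace ℝ (Fin n) =>
        ‖x - γ y‖⁻¹ • (x - γ y)) x := by
      have hsub : ContinuousAt (fun y : EuclideanSpace ℝ (Fin n) => x - γ y) x :=
        (continuous_const.sub hγcont).continuousAt
      exact ((hsub.norm.inv₀ (norm_ne_zero_iff.mpr hxγ)).smul hsub)
    exact hc
  rw [hasFDerivAt_iff_isLittleO, Asymptotics.isLittleO_iff]
  intro ε hε
  have hball : ∀ᶠ z in 𝓝 u, ‖z - u‖ ≤ ε := by
    filter_upwards [Metric.closedBall_mem_nhds u hε] with z hz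
    rw [← dist_eq_norm]
    exact Metric.mem_closedBall.mp hz
  have h1 : ∀ᶠ y in 𝓝 x, ‖(‖y - γ x‖⁻¹ • (y - γ x)) - u‖ ≤ ε := hV.eventually hball
  have h2 : ∀ᶠ y in 𝓝 x, ‖(‖x - γ y‖⁻¹ • (x - γ y)) - u‖ ≤ ε := hW.eventually hball
  have h3 : ∀ᶠ y in 𝓝 x, ‖y - x‖ < Metric.infDist x F := by
    filter_upwards [Metric.ball_mem_nhds x hd] with y hy
    rw [← dist_eq_norm]
    exact Metric.mem_ball.mp hy
  filter_upwards [h1, h2, h3] with y hy1 hy2 hy3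
  set V : EuclideanSpace ℝ (Fin n) := ‖y - γ x‖⁻¹ • (y - γ x) with hVdef
  set W : EuclideanSpace ℝ (Fin n) := ‖x - γ y‖⁻¹ • (x - γ y) with hWdef
  have hyγ : y - γ x ≠ 0 := by
    have ht : dist x (γ x) ≤ dist x y + dist y (γ x) := dist_triangle _ _ _
    rw [dist_eq_norm, dist_eq_norm, dist_eq_norm, norm_sub_rev x y] at ht
    have : 0 < ‖y - γ x‖ := by rw [hdx] at ht; linarith
    exact norm_ne_zero_iff.mp (ne_of_gt this)
  have hxγy : x - γ y ≠ 0 := by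
    have := Metric.infDist_le_dist_of_mem (hγmem y) (x := x)
    rw [dist_eq_norm] at this
    have : 0 < ‖x - γ y‖ := lt_of_lt_of_le hd this
    exact norm_ne_zero_iff.mp (ne_of_gt this)
  -- upper bound
  have hupper : Metric.infDist y F - Metric.infDist x F ≤ ⟪V, y - x⟫ := by
    have hdy : Metric.infDist y F ≤ ‖y - γ x‖ := by
      have := Metric.infDist_le_dist_of_mem (hγmem x) (x := y)
      rwa [dist_eq_norm] at this
    have hk : ‖y - γ x‖ - ‖x - γ x‖ ≤ ⟪V, (y - γ x) - (x - γ x)⟫ := peano_key_ineq hyγ _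
    have hsimp : (y - γ x) - (x - γ x) = y - x := by abel
    rw [hsimp] at hk
    linarith [hdx ▸ hk, hdy]
  -- lower bound
  have hlower : ⟪W, y - x⟫ ≤ Metric.infDist y F - Metric.infDist x F := by
    have hdxle : Metric.infDist x F ≤ ‖x - γ y‖ := by
      have := Metric.infDist_le_dist_of_mem (hγmem y) (x := x)
      rwa [dist_eq_norm] at this
    have hdyeq : ‖y - γ y‖ = Metric.infDist y F := hγnear y
    have hk : ‖x - γ y‖ - ‖y - γ y‖ ≤ ⟪W, (x - γ y) - (y - γ y)⟫ := peano_key_ineq hxγy _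
    have hsimp : (x - γ y) - (y - γ y) = x - y := by abel
    rw [hsimp] at hk
    have hflip : ⟪W, x - y⟫ = -⟪W, y - x⟫ := by
      rw [← inner_neg_right]; congr 1; abel
    rw [hflip] at hk
    linarith
  -- combine
  have happ : (innerSL ℝ u) (y - x) = ⟪u, y - x⟫ := rfl
  have hVu : ⟪V, y - x⟫ - ⟪u, y - x⟫ ≤ ε * ‖y - x‖ := by
    rw [← inner_sub_left]
    calc ⟪V - u, y - x⟫ ≤ ‖V - u‖ * ‖y - x‖ := real_inner_le_norm _ _
    _ ≤ ε * ‖y - x‖ := by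
      apply mul_le_mul_of_nonneg_right hy1 (norm_nonneg _)
  have hWu : -(ε * ‖y - x‖) ≤ ⟪W, y - x⟫ - ⟪u, y - x⟫ := by
    rw [← inner_sub_left]
    have h1 : |⟪W - u, y - x⟫| ≤ ‖W - u‖ * ‖y - x‖ := abs_real_inner_le_norm _ _
    have h2 : ‖W - u‖ * ‖y - x‖ ≤ ε * ‖y - x‖ :=
      mul_le_mul_of_nonneg_right hy2 (norm_nonneg _)
    have := neg_abs_le ⟪W - u, y - x⟫
    linarith
  rw [happ, Real.norm_eq_abs, abs_le]
  constructor
  · linarith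
  · linarith
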